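/- Let h : ℝ → ℝ be a differentiable function satisfying h'(t) = -(1/2)(h(t)² + ν) for all t ∈ ℝ, where ν is a real constant. If h(t)² + ν > 0 for all t, then no such h defined on all of ℝ exists; and if h(t₀)² + ν < 0 at some point, then h vanishes at some point. In particular, a solution defined on all of ℝ that never vanishes must satisfy h² + ν ≡ 0. -/

import Mathlib

open Real Set

private lemma riccati_cont {h : ℝ → ℝ} {ν : ℝ}
    (hderiv : ∀ t : ℝ, HasDerivAt h (-(1/2) * (h t ^ 2 + ν)) t) : Continuous h :=
  continuous_iff_continuousAt.2 fun t => (hderiv t).differentiableAt.continuousAt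

/-- If `Φ` has derivative `-1` on `(-∞, t₂]` and is negative there, contradiction. -/
private lemma blowup_aux (Φ : ℝ → ℝ) (t₂ : ℝ)
    (hΦ : ∀ s ≤ t₂, HasDerivAt Φ (-1) s)
    (hneg : ∀ s ≤ t₂, Φ s < 0) : False := by
  have hΦt₂ : Φ t₂ < 0 := hneg t₂ le_rfl
  set s := t₂ + Φ t₂ - 1 with hs
  have hst : s < t₂ := by simp only [hs]; linarith
  set G : ℝ → ℝ := fun t => Φ t + t with hG
  have hGd : ∀ x ∈ Icc s t₂, HasDerivAt G 0 x := by
    intro x hx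
    have := (hΦ x hx.2).add (hasDerivAt_id x)
    exact this.congr_deriv (by norm_num)
  have hGc : ContinuousOn G (Icc s t₂) :=
    fun x hx => ((hGd x hx).differentiableAt.continuousAt).continuousWithinAt
  obtain ⟨ξ, hξ, hval⟩ := exists_hasDerivAt_eq_slope G (fun _ => (0:ℝ)) hst hGc
    (fun x hx => hGd x ⟨le_of_lt hx.1, le_of_lt hx.2⟩)
  have hzero : G t₂ - G s = 0 := by
    have h1 := hval.symm
    rw [div_eq_zero_iff] at h1
    rcases h1 with h1 | h1
    · exact h1
    · linarith
  have hΦs : Φ s < 0 := hneg s (le_of_lt hst)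
  simp only [hG] at hzero
  -- Φ t₂ + t₂ - (Φ s + s) = 0, s = t₂ + Φ t₂ - 1 ⟹ Φ s = 1
  have : Φ s = 1 := by simp only [hs] at hzero ⊢; linarith
  linarith

/-- time reversal symmetry -/
private lemma riccati_reversal (ν : ℝ) (h : ℝ → ℝ)
    (hderiv : ∀ t : ℝ, HasDerivAt h (-(1/2) * (h t ^ 2 + ν)) t) :
    ∀ t : ℝ, HasDerivAt (fun t => -h (-t)) (-(1/2) * ((-h (-t)) ^ 2 + ν)) t := by
  intro t
  have h1 : HasDerivAt (fun t : ℝ => h (-t)) (-(1/2) * (h (-t) ^ 2 + ν) * (-1)) t := by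
    have := (hderiv (-t)).comp t (hasDerivAt_neg t)
    exact this.congr_deriv (by ring)
  have h2 := h1.neg
  exact h2.congr_deriv (by ring)

/-- If `c < h t₂` with `ν = -c²`, then `c < h s` for all `s ≤ t₂`. -/
private lemma stays_above (ν : ℝ) (h : ℝ → ℝ)
    (hderiv : ∀ t : ℝ, HasDerivAt h (-(1/2) * (h t ^ 2 + ν)) t)
    (c : ℝ) (hc : 0 ≤ c) (hν : ν = -c^2) (t₂ : ℝ) (ht₂ : c < h t₂) :
    ∀ s ≤ t₂, c < h s := by
  intro s hsle
  rcases eq_or_lt_of_le hsle with rfl | hslt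
  · exact ht₂
  by_contra hcon
  push_neg at hcon
  set S := Icc s t₂ ∩ {t | h t ≤ c} with hS
  have hScomp : IsCompact S :=
    isCompact_Icc.inter_right (isClosed_le (riccati_cont hderiv) continuous_const)
  have hSne : S.Nonempty := ⟨s, ⟨le_rfl, le_of_lt hslt⟩, hcon⟩
  obtain ⟨u, huS, humax⟩ := hScomp.exists_isGreatest hSne
  have huc : h u ≤ c := huS.2
  have huIcc : u ∈ Icc s t₂ := huS.1
  have hut₂ : u < t₂ := lt_of_le_of_ne huIcc.2 (fun he => by rw [he] at huc; linarith)
  have hmid : ∀ t ∈ Ioc u t₂, c < h t := by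
    intro t ht
    by_contra hle
    push_neg at hle
    have : t ∈ S := ⟨⟨le_trans huIcc.1 (le_of_lt ht.1), ht.2⟩, hle⟩
    exact absurd (humax this) (not_le.2 ht.1)
  have hanti : StrictAntiOn h (Icc u t₂) := by
    apply strictAntiOn_of_deriv_neg (convex_Icc u t₂) (riccati_cont hderiv).continuousOn
    intro x hx
    rw [interior_Icc] at hx
    rw [(hderiv x).deriv]
    have hcx : c < h x := hmid x ⟨hx.1, le_of_lt hx.2⟩
    have : c ^ 2 < h x ^ 2 := by nlinarith
    rw [hν] at *
    nlinarith
  have := hanti (left_mem_Icc.2 (le_of_lt hut₂)) (right_mem_Icc.2 (le_of_lt hut₂)) hut₂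
  linarith

/-- No global solution can have `√(-ν) < h t₂` when `ν ≤ 0`. -/
private lemma no_gt (ν : ℝ) (h : ℝ → ℝ)
    (hderiv : ∀ t : ℝ, HasDerivAt h (-(1/2) * (h t ^ 2 + ν)) t)
    (hν : ν ≤ 0) (t₂ : ℝ) (ht₂ : Real.sqrt (-ν) < h t₂) : False := by
  set c := Real.sqrt (-ν) with hcdef
  have hc0 : 0 ≤ c := Real.sqrt_nonneg _
  have hc2 : c ^ 2 = -ν := Real.sq_sqrt (by linarith)
  have hνc : ν = -c ^ 2 := by linarith
  have habove : ∀ s ≤ t₂, c < h s := stays_above ν h hderiv c hc0 hνc t₂ ht₂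
  rcases eq_or_lt_of_le hc0 with hc | hcpos
  · -- c = 0, ν = 0
    apply blowup_aux (fun t => -2 / h t) t₂
    · intro s hs
      have hy : 0 < h s := by have := habove s hs; linarith
      have hinv : HasDerivAt (fun x : ℝ => -2 / x) (-2 * -((h s) ^ 2)⁻¹) (h s) := by
        have := (hasDerivAt_inv (ne_of_gt hy)).const_mul (-2 : ℝ)
        simpa [div_eq_mul_inv] using this
      have hcomp := hinv.comp s (hderiv s)
      have heq : -2 * -((h s) ^ 2)⁻¹ * (-(1/2) * (h s ^ 2 + ν)) = -1 := by
        have hν0 : ν = 0 := by nlinarith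
        rw [hν0]
        field_simp
        ring
      rw [heq] at hcomp
      exact hcomp
    · intro s hs
      have hy : 0 < h s := by have := habove s hs; linarith
      exact div_neg_of_neg_of_pos (by norm_num) hy
  · -- c > 0
    apply blowup_aux (fun t => (Real.log (h t - c) - Real.log (h t + c)) / c) t₂
    · intro s hs
      have hy : c < h s := habove s hs
      have h1 : HasDerivAt (fun x : ℝ => Real.log (x - c)) (1 / (h s - c)) (h s) := by
        have := ((hasDerivAt_id (h s)).sub_const c).log
          (by simp only [id_eq, sub_ne_zero]; exact ne_of_gt hy)
        simpa using this
      have h2 : HasDerivAt (fun x : ℝ => Real.log (x + c)) (1 / (h s + c)) (h s) := by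
        have := ((hasDerivAt_id (h s)).add_const c).log
          (by simp only [id_eq]; exact ne_of_gt (by linarith))
        simpa using this
      have hF : HasDerivAt (fun x : ℝ => (Real.log (x - c) - Real.log (x + c)) / c)
          ((1 / (h s - c) - 1 / (h s + c)) / c) (h s) := (h1.sub h2).div_const c
      have hcomp := hF.comp s (hderiv s)
      have heq : (1 / (h s - c) - 1 / (h s + c)) / c * (-(1/2) * (h s ^ 2 + ν)) = -1 := by
        rw [hνc]
        have hne1 : h s - c ≠ 0 := ne_of_gt (by linarith)
        have hne2 : h s + c ≠ 0 := ne_of_gt (by linarith)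
        have hne3 : c ≠ 0 := ne_of_gt hcpos
        field_simp
        ring
      rw [heq] at hcomp
      exact hcomp
    · intro s hs
      have hy : c < h s := habove s hs
      have hlog : Real.log (h s - c) < Real.log (h s + c) :=
        Real.log_lt_log (by linarith) (by linarith)
      exact div_neg_of_neg_of_pos (by linarith) hcpos

private lemma no_lt (ν : ℝ) (h : ℝ → ℝ)
    (hderiv : ∀ t : ℝ, HasDerivAt h (-(1/2) * (h t ^ 2 + ν)) t)
    (hν : ν ≤ 0) (t₂ : ℝ) (ht₂ : h t₂ < -Real.sqrt (-ν)) : False := by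
  apply no_gt ν (fun t => -h (-t)) (riccati_reversal ν h hderiv) hν (-t₂)
  simp only [neg_neg]
  linarith

/-- No global solution has a point with `h t₂ ^ 2 + ν > 0`. -/
private lemma no_pos (ν : ℝ) (h : ℝ → ℝ)
    (hderiv : ∀ t : ℝ, HasDerivAt h (-(1/2) * (h t ^ 2 + ν)) t)
    (t₂ : ℝ) (hpos : 0 < h t₂ ^ 2 + ν) : False := by
  rcases le_or_gt ν 0 with hν | hν
  · have h2 : (Real.sqrt (-ν)) ^ 2 = -ν := Real.sq_sqrt (by linarith)
    have hgt : -ν < h t₂ ^ 2 := by linarith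
    have hs0 : 0 ≤ Real.sqrt (-ν) := Real.sqrt_nonneg _
    rcases lt_trichotomy (h t₂) 0 with hlt | heq | hgtz
    · apply no_lt ν h hderiv hν t₂
      nlinarith
    · rw [heq] at hpos; norm_num at hpos; linarith
    · apply no_gt ν h hderiv hν t₂
      nlinarith
  · -- ν > 0 : arctan blow-up
    set q := Real.sqrt ν with hq
    have hq0 : 0 < q := Real.sqrt_pos.2 hν
    have hq2 : q ^ 2 = ν := Real.sq_sqrt (le_of_lt hν)
    apply blowup_aux (fun t => (2 / q) * (Real.arctan (h t / q) - π / 2)) 0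
    · intro s _
      have hinner : HasDerivAt (fun t : ℝ => h t / q) (-(1/2) * (h s ^ 2 + ν) / q) s :=
        (hderiv s).div_const q
      have harc : HasDerivAt (fun t : ℝ => Real.arctan (h t / q))
          ((1 / (1 + (h s / q) ^ 2)) * (-(1/2) * (h s ^ 2 + ν) / q)) s :=
        HasDerivAt.comp (h₂ := Real.arctan) s (Real.hasDerivAt_arctan (h s / q)) hinner
      have hF := ((harc.sub_const (π / 2)).const_mul (2 / q))
      have heq : (2 / q) * ((1 / (1 + (h s / q) ^ 2)) * (-(1/2) * (h s ^ 2 + ν) / q)) = -1 := by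
        rw [← hq2]
        have hne : q ≠ 0 := ne_of_gt hq0
        have hden : 1 + (h s / q) ^ 2 ≠ 0 := by positivity
        field_simp
        ring
      rw [heq] at hF
      exact hF
    · intro s _
      have := Real.arctan_lt_pi_div_two (h s / q)
      have h1 : Real.arctan (h s / q) - π / 2 < 0 := by linarith
      exact mul_neg_of_pos_of_neg (by positivity) h1

/-- If `h t₀ < c` with `ν = -c²` and `h` positive, then `h s < c` for all `s ≤ t₀`. -/
private lemma stays_below (ν : ℝ) (h : ℝ → ℝ)
    (hderiv : ∀ t : ℝ, HasDerivAt h (-(1/2) * (h t ^ 2 + ν)) t)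
    (c : ℝ) (hc : 0 < c) (hν : ν = -c^2) (hpos : ∀ t, 0 < h t)
    (t₀ : ℝ) (ht₀ : h t₀ < c) : ∀ s ≤ t₀, h s < c := by
  intro s hsle
  rcases eq_or_lt_of_le hsle with rfl | hslt
  · exact ht₀
  by_contra hcon
  push_neg at hcon
  set S := Icc s t₀ ∩ {t | c ≤ h t} with hS
  have hScomp : IsCompact S :=
    isCompact_Icc.inter_right (isClosed_le continuous_const (riccati_cont hderiv))
  have hSne : S.Nonempty := ⟨s, ⟨le_rfl, le_of_lt hslt⟩, hcon⟩
  obtain ⟨u, huS, humax⟩ := hScomp.exists_isGreatest hSne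
  have huc : c ≤ h u := huS.2
  have huIcc : u ∈ Icc s t₀ := huS.1
  have hut₀ : u < t₀ := lt_of_le_of_ne huIcc.2 (fun he => by rw [he] at huc; linarith)
  have hmid : ∀ t ∈ Ioc u t₀, h t < c := by
    intro t ht
    by_contra hle
    push_neg at hle
    have : t ∈ S := ⟨⟨le_trans huIcc.1 (le_of_lt ht.1), ht.2⟩, hle⟩
    exact absurd (humax this) (not_le.2 ht.1)
  have hmono : StrictMonoOn h (Icc u t₀) := by
    apply strictMonoOn_of_deriv_pos (convex_Icc u t₀) (riccati_cont hderiv).continuousOn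
    intro x hx
    rw [interior_Icc] at hx
    rw [(hderiv x).deriv]
    have hcx : h x < c := hmid x ⟨hx.1, le_of_lt hx.2⟩
    have hx0 : 0 < h x := hpos x
    have : h x ^ 2 < c ^ 2 := by nlinarith
    rw [hν] at *
    nlinarith
  have := hmono (left_mem_Icc.2 (le_of_lt hut₀)) (right_mem_Icc.2 (le_of_lt hut₀)) hut₀
  linarith

/-- A nowhere-vanishing solution positive at `t₀` cannot have `h t₀ ^ 2 + ν < 0`. -/
private lemma vanish_pos (ν : ℝ) (h : ℝ → ℝ)
    (hderiv : ∀ t : ℝ, HasDerivAt h (-(1/2) * (h t ^ 2 + ν)) t)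
    (hne : ∀ t, h t ≠ 0) (t₀ : ℝ) (hlt : h t₀ ^ 2 + ν < 0) (hposi : 0 < h t₀) : False := by
  have hν : ν < 0 := by nlinarith
  set c := Real.sqrt (-ν) with hcdef
  have hcpos : 0 < c := Real.sqrt_pos.2 (by linarith)
  have hc2 : c ^ 2 = -ν := Real.sq_sqrt (by linarith)
  have hνc : ν = -c ^ 2 := by linarith
  have ht₀c : h t₀ < c := by nlinarith
  have hpos : ∀ t, 0 < h t := by
    intro t
    rcases lt_trichotomy (h t) 0 with hl | he | hg
    · exfalso
      have hcont := (riccati_cont hderiv).continuousOn (s := uIcc t t₀)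
      have h0mem : (0:ℝ) ∈ uIcc (h t) (h t₀) := by
        rw [mem_uIcc]; left; exact ⟨le_of_lt hl, le_of_lt hposi⟩
      obtain ⟨x, _, hx⟩ := intermediate_value_uIcc hcont h0mem
      exact hne x hx
    · exact absurd he (hne t)
    · exact hg
  have hbelow : ∀ s ≤ t₀, h s < c := stays_below ν h hderiv c hcpos hνc hpos t₀ ht₀c
  apply blowup_aux (fun t => (Real.log (c - h t) - Real.log (c + h t)) / c) t₀
  · intro s hs
    have hy1 : 0 < h s := hpos s
    have hy2 : h s < c := hbelow s hs
    have h1 : HasDerivAt (fun x : ℝ => Real.log (c - x)) (-1 / (c - h s)) (h s) := by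
      have hd : HasDerivAt (fun x : ℝ => c - x) (-1 : ℝ) (h s) := by
        simpa using (hasDerivAt_id (h s)).const_sub c
      have := hd.log (ne_of_gt (by linarith))
      simpa using this
    have h2 : HasDerivAt (fun x : ℝ => Real.log (c + x)) (1 / (c + h s)) (h s) := by
      have hd : HasDerivAt (fun x : ℝ => c + x) (1 : ℝ) (h s) := by
        simpa using (hasDerivAt_id (h s)).const_add c
      have := hd.log (ne_of_gt (by linarith))
      simpa using this
    have hF : HasDerivAt (fun x : ℝ => (Real.log (c - x) - Real.log (c + x)) / c)
        ((-1 / (c - h s) - 1 / (c + h s)) / c) (h s) := (h1.sub h2).div_const c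
    have hcomp := hF.comp s (hderiv s)
    have heq : (-1 / (c - h s) - 1 / (c + h s)) / c * (-(1/2) * (h s ^ 2 + ν)) = -1 := by
      rw [hνc]
      have hne1 : c - h s ≠ 0 := ne_of_gt (by linarith)
      have hne2 : c + h s ≠ 0 := ne_of_gt (by linarith)
      have hne3 : c ≠ 0 := ne_of_gt hcpos
      field_simp
      ring
    rw [heq] at hcomp
    exact hcomp
  · intro s hs
    have hy1 : 0 < h s := hpos s
    have hy2 : h s < c := hbelow s hs
    have hlog : Real.log (c - h s) < Real.log (c + h s) :=
      Real.log_lt_log (by linarith) (by linarith)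
    exact div_neg_of_neg_of_pos (by linarith) hcpos

private lemma vanish_neg (ν : ℝ) (h : ℝ → ℝ)
    (hderiv : ∀ t : ℝ, HasDerivAt h (-(1/2) * (h t ^ 2 + ν)) t)
    (hne : ∀ t, h t ≠ 0) (t₀ : ℝ) (hlt : h t₀ ^ 2 + ν < 0) (hnegi : h t₀ < 0) : False := by
  apply vanish_pos ν (fun t => -h (-t)) (riccati_reversal ν h hderiv)
    (fun t => neg_ne_zero.2 (hne (-t))) (-t₀)
  · simp only [neg_neg, neg_sq]
    exact hlt
  · simp only [neg_neg]
    linarith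

/-- for the ODE `h' = -(1/2)(h² + ν)` on all of `ℝ`:
no global solution has `h² + ν > 0` everywhere; a solution with `h(t₀)² + ν < 0` somewhere
vanishes at some point; hence a global nowhere-vanishing solution satisfies `h² + ν ≡ 0`. -/
theorem riccati_global_solution (ν : ℝ) (h : ℝ → ℝ)
    (hderiv : ∀ t : ℝ, HasDerivAt h (-(1/2) * (h t ^ 2 + ν)) t) :
    (¬ ∀ t : ℝ, 0 < h t ^ 2 + ν) ∧
    ((∃ t₀ : ℝ, h t₀ ^ 2 + ν < 0) → ∃ t : ℝ, h t = 0) ∧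
    ((∀ t : ℝ, h t ≠ 0) → ∀ t : ℝ, h t ^ 2 + ν = 0) := by
  refine ⟨?_, ?_, ?_⟩
  · intro hall
    exact no_pos ν h hderiv 0 (hall 0)
  · rintro ⟨t₀, hlt⟩
    by_contra hcon
    push_neg at hcon
    rcases lt_trichotomy (h t₀) 0 with hl | he | hg
    · exact vanish_neg ν h hderiv hcon t₀ hlt hl
    · exact hcon t₀ he
    · exact vanish_pos ν h hderiv hcon t₀ hlt hg
  · intro hne t
    have h1 : ¬ (0 < h t ^ 2 + ν) := fun hp => no_pos ν h hderiv t hp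
    have h2 : ¬ (h t ^ 2 + ν < 0) := by
      intro hl
      rcases lt_trichotomy (h t) 0 with hl' | he | hg
      · exact vanish_neg ν h hderiv hne t hl hl'
      · exact hne t he
      · exact vanish_pos ν h hderiv hne t hl hg
    linarith
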